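/- arXiv:1808.10615 — 3 statements merged into one kernel-verified Lean document; each statement's English description precedes it below -/
import Mathlib

section
/- Let L be a real inner product space. For any vectors a, b, m, n in L with ⟨m, n⟩ = 0, the inequality ‖a − m‖²·‖b‖² + ‖a‖²·‖b − n‖² + 2·‖a − m‖·‖b − n‖·√(‖a‖²·‖b‖² − ⟨a, b⟩²) ≥ ⟨a, b⟩² holds. -/
lemma scalar_key (α β γ δ A ε η s : ℝ)
    (hα1 : -ε ≤ α) (hα2 : α ≤ ε) (hδ0 : 0 ≤ δ) (hδη : δ ≤ η)
    (hA : α^2 + β^2 ≤ A) (hs1 : α*δ - β*γ ≤ s) (hs2 : β*γ - α*δ ≤ s) :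
    (α*γ + β*δ)^2 ≤ ε^2*(γ^2+δ^2) + A*η^2 + 2*ε*η*s := by
  have hε0 : 0 ≤ ε := by linarith
  have hs0 : 0 ≤ s := by linarith
  have hη0 : 0 ≤ η := by linarith
  have habs : |α| ≤ ε := abs_le.mpr ⟨hα1, hα2⟩
  have hα0 : 0 ≤ |α| := abs_nonneg _
  have h1 : α*β*γ*δ ≤ α^2*δ^2 + |α| * δ * s := by
    have e1 : α*β*γ*δ ≤ |α| * δ * |β*γ| := by
      calc α*β*γ*δ ≤ |α*β*γ*δ| := le_abs_self _
        _ = |α| * δ * |β*γ| := by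
            rw [show α*β*γ*δ = α*(β*γ)*δ by ring, abs_mul, abs_mul, abs_of_nonneg hδ0]
            ring
    have e2 : |β*γ| ≤ s + |α| * δ := by
      calc |β*γ| = |(β*γ - α*δ) + α*δ| := by ring_nf
        _ ≤ |β*γ - α*δ| + |α*δ| := abs_add_le _ _
        _ ≤ s + |α| * δ := by
            have : |β*γ - α*δ| ≤ s := abs_le.mpr ⟨by linarith, hs2⟩
            rw [abs_mul, abs_of_nonneg hδ0]; linarith
    have e3 : |α| * δ * |β*γ| ≤ |α| * δ * (s + |α| * δ) :=
      mul_le_mul_of_nonneg_left e2 (mul_nonneg hα0 hδ0)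
    nlinarith [sq_abs α]
  have hαsq : α^2 ≤ ε^2 := sq_le_sq' hα1 hα2
  have hδsq : δ^2 ≤ η^2 := sq_le_sq' (by linarith) hδη
  have p1 : α^2*γ^2 ≤ ε^2*γ^2 := mul_le_mul_of_nonneg_right hαsq (sq_nonneg γ)
  have p2 : α^2*δ^2 ≤ ε^2*δ^2 := mul_le_mul_of_nonneg_right hαsq (sq_nonneg δ)
  have p3 : (α^2+β^2)*δ^2 ≤ A*η^2 :=
    mul_le_mul hA hδsq (sq_nonneg δ) (by nlinarith [sq_nonneg α, sq_nonneg β])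
  have p4 : |α| * δ * s ≤ ε*η*s :=
    mul_le_mul_of_nonneg_right (mul_le_mul habs hδη hδ0 hε0) hs0
  nlinarith [sq_abs α]

set_option maxHeartbeats 1000000 in
/-- Branciard's geometric inequality. -/
theorem branciard_geometric_inequality
    {L : Type*} [NormedAddCommGroup L] [InnerProductSpace ℝ L]
    (a b m n : L) (hmn : (inner ℝ m n : ℝ) = 0) :
    ‖a - m‖ ^ 2 * ‖b‖ ^ 2 + ‖a‖ ^ 2 * ‖b - n‖ ^ 2 +
      2 * ‖a - m‖ * ‖b - n‖ * Real.sqrt (‖a‖ ^ 2 * ‖b‖ ^ 2 - (inner ℝ a b : ℝ) ^ 2)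
      ≥ (inner ℝ a b : ℝ) ^ 2 := by
  set s : ℝ := Real.sqrt (‖a‖ ^ 2 * ‖b‖ ^ 2 - (inner ℝ a b : ℝ) ^ 2) with hs
  have hs0 : 0 ≤ s := Real.sqrt_nonneg _
  have hcs : (inner ℝ a b : ℝ)^2 ≤ ‖a‖^2 * ‖b‖^2 := by
    have := real_inner_mul_inner_self_le a b
    rw [real_inner_self_eq_norm_sq, real_inner_self_eq_norm_sq] at this
    nlinarith [this]
  by_cases hn : n = 0
  · subst hn
    simp only [sub_zero]
    nlinarith [mul_nonneg (mul_nonneg (mul_nonneg (by norm_num : (0:ℝ) ≤ 2) (norm_nonneg (a-m))) (norm_nonneg b)) hs0,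
      mul_nonneg (sq_nonneg ‖a-m‖) (sq_nonneg ‖b‖)]
  · have hN0 : (0:ℝ) < ‖n‖ := norm_pos_iff.mpr hn
    set t : ℝ := (inner ℝ b n : ℝ) / ‖n‖^2 with ht
    set w : L := b - t • n with hw
    have hwn : (inner ℝ w n : ℝ) = 0 := by
      rw [hw, inner_sub_left, real_inner_smul_left, real_inner_self_eq_norm_sq, ht]
      field_simp
      ring
    have hnw : (inner ℝ n w : ℝ) = 0 := by rw [real_inner_comm]; exact hwn
    set α : ℝ := (inner ℝ a n : ℝ) / ‖n‖ with hα
    set γ : ℝ := (inner ℝ b n : ℝ) / ‖n‖ with hγ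
    set δ : ℝ := ‖w‖ with hδ
    set β : ℝ := (inner ℝ a w : ℝ) / δ with hβ
    have hδ0 : 0 ≤ δ := norm_nonneg _
    have h1 : δ^2 = ‖b‖^2 - 2 * (t * (inner ℝ b n : ℝ)) + t^2 * ‖n‖^2 := by
      rw [hδ, hw, norm_sub_sq_real, real_inner_smul_right, norm_smul]
      simp [mul_pow, sq_abs]
    -- F2 : ‖b‖^2 = γ^2 + δ^2
    have hF2 : ‖b‖^2 = γ^2 + δ^2 := by
      rw [hγ, h1, ht]
      field_simp
      ring
    -- decomposition of inner a b
    have hdec : (inner ℝ a b : ℝ) = t * (inner ℝ a n : ℝ) + (inner ℝ a w : ℝ) := by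
      rw [hw, inner_sub_right, real_inner_smul_right]; ring
    have hβδ : β * δ = (inner ℝ a w : ℝ) := by
      rcases eq_or_lt_of_le hδ0 with h0 | h0
      · have hw0 : w = 0 := by rw [← norm_eq_zero, ← hδ]; exact h0.symm
        rw [hβ, ← h0, hw0, inner_zero_right]; simp
      · rw [hβ]; field_simp
    have hF3 : (inner ℝ a b : ℝ) = α*γ + β*δ := by
      rw [hdec, hβδ, hα, hγ, ht]
      field_simp
    -- F4 : |α| ≤ ‖a - m‖
    have hF4 : |α| ≤ ‖a - m‖ := by
      have h1 : (inner ℝ a n : ℝ) = inner ℝ (a - m) n := by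
        rw [inner_sub_left, hmn]; ring
      have h2 : |(inner ℝ (a-m) n : ℝ)| ≤ ‖a - m‖ * ‖n‖ := abs_real_inner_le_norm _ _
      rw [hα, h1, abs_div, abs_of_pos hN0, div_le_iff₀ hN0]
      exact h2
    -- F5 : δ ≤ ‖b - n‖
    have hF5 : δ ≤ ‖b - n‖ := by
      have hbn : b - n = w + (t - 1) • n := by
        rw [hw, sub_smul, one_smul]; abel
      have h1 : ‖b - n‖^2 = δ^2 + 2*((t-1) * (inner ℝ w n : ℝ)) + (t-1)^2*‖n‖^2 := by
        rw [hbn, norm_add_sq_real, real_inner_smul_right, norm_smul, hδ]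
        simp [mul_pow, sq_abs]
      rw [hwn] at h1
      nlinarith [norm_nonneg (b - n), hδ0, mul_nonneg (sq_nonneg (t-1)) (sq_nonneg ‖n‖)]
    -- F6 : α^2 + β^2 ≤ ‖a‖^2
    have hF6 : α^2 + β^2 ≤ ‖a‖^2 := by
      have hube : ∀ x : L, ((inner ℝ a x : ℝ))^2 ≤ ‖a‖^2 * ‖x‖^2 := fun x => by
        have h2 := abs_real_inner_le_norm a x
        have h3 := mul_le_mul h2 h2 (abs_nonneg _) (by positivity)
        rw [abs_mul_abs_self] at h3
        nlinarith [h3]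
      rcases eq_or_lt_of_le hδ0 with h0 | h0
      · have hw0 : w = 0 := by rw [← norm_eq_zero, ← hδ]; exact h0.symm
        have hβ0 : β = 0 := by rw [hβ, hw0, inner_zero_right]; simp
        have hd : α^2 = (inner ℝ a n : ℝ)^2 / ‖n‖^2 := by rw [hα, div_pow]
        have : (inner ℝ a n : ℝ)^2 / ‖n‖^2 ≤ ‖a‖^2 := by
          rw [div_le_iff₀ (by positivity)]
          nlinarith [hube n]
        rw [hβ0, hd]
        nlinarith [this]
      · set p : ℝ := (inner ℝ a n : ℝ) / ‖n‖^2 with hp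
        set q : ℝ := (inner ℝ a w : ℝ) / δ^2 with hq
        have key : ‖a - p • n - q • w‖^2
            = ‖a‖^2 - (inner ℝ a n : ℝ)^2/‖n‖^2 - (inner ℝ a w : ℝ)^2/δ^2 := by
          have e1 : ‖a - p • n‖^2 = ‖a‖^2 - 2*(p * (inner ℝ a n : ℝ)) + p^2*‖n‖^2 := by
            rw [norm_sub_sq_real, real_inner_smul_right, norm_smul]
            simp [mul_pow, sq_abs]
          have e2 : (inner ℝ (a - p • n) (q • w) : ℝ) = q * (inner ℝ a w : ℝ) := by
            rw [real_inner_smul_right, inner_sub_left, real_inner_smul_left, hnw]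
            ring
          have e3 : ‖q • w‖^2 = q^2 * δ^2 := by
            rw [norm_smul]; simp [mul_pow, sq_abs, hδ]
          rw [norm_sub_sq_real, e1, e2, e3, hp, hq]
          field_simp
          ring
        have h0' : (0:ℝ) ≤ ‖a - p • n - q • w‖^2 := sq_nonneg _
        rw [key] at h0'
        have hd1 : α^2 = (inner ℝ a n : ℝ)^2 / ‖n‖^2 := by rw [hα, div_pow]
        have hd2 : β^2 = (inner ℝ a w : ℝ)^2 / δ^2 := by rw [hβ, div_pow]
        rw [hd1, hd2]
        linarith
    -- F7
    have hF7' : (α*δ - β*γ)^2 ≤ ‖a‖^2*‖b‖^2 - (inner ℝ a b : ℝ)^2 := by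
      rw [hF2, hF3]
      nlinarith [mul_nonneg (sub_nonneg.2 hF6) (by positivity : (0:ℝ) ≤ γ^2+δ^2)]
    have hF7 : |α*δ - β*γ| ≤ s := by
      rw [hs, ← Real.sqrt_sq_eq_abs]
      exact Real.sqrt_le_sqrt hF7'
    have habs := abs_le.mp hF4
    have habs2 := abs_le.mp hF7
    have final := scalar_key α β γ δ (‖a‖^2) (‖a-m‖) (‖b-n‖) s
      habs.1 habs.2 hδ0 hF5 hF6 habs2.2 (by linarith [habs2.1])
    rw [ge_iff_le, hF3, hF2]
    linarith [final]
end

section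
/- Let L be a real inner product space, let a, b, m, n ∈ L satisfy ⟨m, n⟩ = 0, and let ε, η, α, β be real numbers with ε ≥ ‖a − m‖, η ≥ ‖b − n‖, α ≥ ‖a‖, and β ≥ ‖b‖. Then ε²·β² + α²·η² + 2·ε·η·√(α²·β² − ⟨a, b⟩²) ≥ ⟨a, b⟩². -/
open RealInnerProductSpace

/-- Key step: for `m ⊥ n`, `‖b - n‖ < ‖b‖` and `⟪a, b⟫ ≥ 0`,
`⟪a,b⟫ √(‖b‖² - ‖b-n‖²) ≤ ‖a-m‖ ‖b‖² + ‖b-n‖ √(‖a‖²‖b‖² - ⟪a,b⟫²)`. -/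
lemma branciard_starstar {L : Type*} [NormedAddCommGroup L] [InnerProductSpace ℝ L]
    (a b m n : L) (hmn : ⟪m, n⟫ = 0) (hc : 0 ≤ ⟪a, b⟫)
    (hlt : ‖b - n‖ < ‖b‖) :
    ⟪a, b⟫ * Real.sqrt (‖b‖ ^ 2 - ‖b - n‖ ^ 2)
      ≤ ‖a - m‖ * ‖b‖ ^ 2
        + ‖b - n‖ * Real.sqrt (‖a‖ ^ 2 * ‖b‖ ^ 2 - ⟪a, b⟫ ^ 2) := by
  have hn0 : n ≠ 0 := by rintro rfl; simp at hlt
  have hN : 0 < ‖n‖ := norm_pos_iff.mpr hn0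
  have hη0 : 0 ≤ ‖b - n‖ := norm_nonneg _
  have hβ : 0 < ‖b‖ := lt_of_le_of_lt hη0 hlt
  have hη2 : ‖b - n‖ ^ 2 = ‖b‖ ^ 2 - 2 * ⟪b, n⟫ + ‖n‖ ^ 2 := norm_sub_sq_real b n
  have hltsq : ‖b - n‖ ^ 2 < ‖b‖ ^ 2 := by nlinarith
  have hKpos : (0:ℝ) < ⟪b, n⟫ := by nlinarith [sq_nonneg ‖n‖]
  have hk2 : ‖n‖ ^ 2 * (‖b‖ ^ 2 - ‖b - n‖ ^ 2) ≤ ⟪b, n⟫ ^ 2 := by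
    nlinarith [sq_nonneg (⟪b, n⟫ - ‖n‖ ^ 2)]
  have hQle : ⟪a, n⟫ ≤ ‖a - m‖ * ‖n‖ := by
    have h1 : ⟪a - m, n⟫ = ⟪a, n⟫ := by rw [inner_sub_left, hmn]; ring
    calc ⟪a, n⟫ = ⟪a - m, n⟫ := h1.symm
    _ ≤ ‖a - m‖ * ‖n‖ := real_inner_le_norm _ _
  have hCS : ⟪a, b⟫ ^ 2 ≤ ‖a‖ ^ 2 * ‖b‖ ^ 2 := by
    have h := abs_real_inner_le_norm a b
    nlinarith [sq_abs ⟪a, b⟫, abs_nonneg ⟪a, b⟫, norm_nonneg a, norm_nonneg b]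
  set D := Real.sqrt (‖a‖ ^ 2 * ‖b‖ ^ 2 - ⟪a, b⟫ ^ 2) with hD'
  have hD0 : 0 ≤ D := Real.sqrt_nonneg _
  have hD2 : D ^ 2 = ‖a‖ ^ 2 * ‖b‖ ^ 2 - ⟪a, b⟫ ^ 2 := Real.sq_sqrt (by linarith)
  -- Cauchy–Schwarz for the components orthogonal to b
  have hkey : (‖b‖ ^ 2 * ⟪a, n⟫ - ⟪a, b⟫ * ⟪b, n⟫) ^ 2
      ≤ D ^ 2 * (‖n‖ ^ 2 * ‖b‖ ^ 2 - ⟪b, n⟫ ^ 2) := by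
    set x := (‖b‖ ^ 2 : ℝ) • a - ⟪a, b⟫ • b with hx
    set y := (‖b‖ ^ 2 : ℝ) • n - ⟪b, n⟫ • b with hy
    have exy : ⟪x, y⟫ = ‖b‖ ^ 2 * (‖b‖ ^ 2 * ⟪a, n⟫ - ⟪a, b⟫ * ⟪b, n⟫) := by
      simp only [hx, hy, inner_sub_left, inner_sub_right, real_inner_smul_left,
        real_inner_smul_right, real_inner_self_eq_norm_sq]
      rw [real_inner_comm b a, real_inner_comm n b]
      ring
    have exx : ⟪x, x⟫ = ‖b‖ ^ 2 * (‖a‖ ^ 2 * ‖b‖ ^ 2 - ⟪a, b⟫ ^ 2) := by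
      simp only [hx, inner_sub_left, inner_sub_right, real_inner_smul_left,
        real_inner_smul_right, real_inner_self_eq_norm_sq, norm_smul, Real.norm_eq_abs,
        mul_pow, sq_abs]
      rw [real_inner_comm b a]
      ring
    have eyy : ⟪y, y⟫ = ‖b‖ ^ 2 * (‖n‖ ^ 2 * ‖b‖ ^ 2 - ⟪b, n⟫ ^ 2) := by
      simp only [hy, inner_sub_left, inner_sub_right, real_inner_smul_left,
        real_inner_smul_right, real_inner_self_eq_norm_sq, norm_smul, Real.norm_eq_abs,
        mul_pow, sq_abs]
      rw [real_inner_comm n b]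
      ring
    have h := real_inner_mul_inner_self_le x y
    rw [exy, exx, eyy] at h
    have hb4 : (0:ℝ) < (‖b‖ ^ 2) ^ 2 := by positivity
    refine le_of_mul_le_mul_left ?_ hb4
    calc (‖b‖ ^ 2) ^ 2 * (‖b‖ ^ 2 * ⟪a, n⟫ - ⟪a, b⟫ * ⟪b, n⟫) ^ 2
        = (‖b‖ ^ 2 * (‖b‖ ^ 2 * ⟪a, n⟫ - ⟪a, b⟫ * ⟪b, n⟫)) *
          (‖b‖ ^ 2 * (‖b‖ ^ 2 * ⟪a, n⟫ - ⟪a, b⟫ * ⟪b, n⟫)) := by ring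
    _ ≤ (‖b‖ ^ 2 * (‖a‖ ^ 2 * ‖b‖ ^ 2 - ⟪a, b⟫ ^ 2)) *
          (‖b‖ ^ 2 * (‖n‖ ^ 2 * ‖b‖ ^ 2 - ⟪b, n⟫ ^ 2)) := h
    _ = (‖b‖ ^ 2) ^ 2 * ((‖a‖ ^ 2 * ‖b‖ ^ 2 - ⟪a, b⟫ ^ 2) * (‖n‖ ^ 2 * ‖b‖ ^ 2 - ⟪b, n⟫ ^ 2)) := by
          ring
    _ = (‖b‖ ^ 2) ^ 2 * (D ^ 2 * (‖n‖ ^ 2 * ‖b‖ ^ 2 - ⟪b, n⟫ ^ 2)) := by rw [hD2]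
  have h3 : (⟪a, b⟫ * ⟪b, n⟫ - ‖b‖ ^ 2 * ⟪a, n⟫) ^ 2
      ≤ (D * (‖n‖ * ‖b - n‖)) ^ 2 := by nlinarith [sq_nonneg D]
  have h4 : ⟪a, b⟫ * ⟪b, n⟫ - ‖b‖ ^ 2 * ⟪a, n⟫ ≤ D * (‖n‖ * ‖b - n‖) := by
    nlinarith [mul_nonneg hD0 (mul_nonneg hN.le hη0)]
  have hNS : ‖n‖ * Real.sqrt (‖b‖ ^ 2 - ‖b - n‖ ^ 2) ≤ ⟪b, n⟫ := by
    have h5 : Real.sqrt (‖n‖ ^ 2 * (‖b‖ ^ 2 - ‖b - n‖ ^ 2)) ≤ Real.sqrt (⟪b, n⟫ ^ 2) :=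
      Real.sqrt_le_sqrt hk2
    rwa [Real.sqrt_mul (sq_nonneg _), Real.sqrt_sq hN.le, Real.sqrt_sq hKpos.le] at h5
  have hS0 : 0 ≤ Real.sqrt (‖b‖ ^ 2 - ‖b - n‖ ^ 2) := Real.sqrt_nonneg _
  nlinarith [mul_le_mul_of_nonneg_left hNS hc, h4,
    mul_le_mul_of_nonneg_left hQle (sq_nonneg ‖b‖), hN, hS0, hD0]

/-- Tight version of Branciard's inequality, assuming `⟪a,b⟫ ≥ 0`. -/
lemma branciard_tight {L : Type*} [NormedAddCommGroup L] [InnerProductSpace ℝ L]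
    (a b m n : L) (hmn : ⟪m, n⟫ = 0) (hc : 0 ≤ ⟪a, b⟫) :
    ⟪a, b⟫ ^ 2 ≤ ‖a - m‖ ^ 2 * ‖b‖ ^ 2 + ‖a‖ ^ 2 * ‖b - n‖ ^ 2 +
      2 * ‖a - m‖ * ‖b - n‖ * Real.sqrt (‖a‖ ^ 2 * ‖b‖ ^ 2 - ⟪a, b⟫ ^ 2) := by
  have hCS : ⟪a, b⟫ ^ 2 ≤ ‖a‖ ^ 2 * ‖b‖ ^ 2 := by
    have h := abs_real_inner_le_norm a b
    nlinarith [sq_abs ⟪a, b⟫, abs_nonneg ⟪a, b⟫, norm_nonneg a, norm_nonneg b]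
  set D := Real.sqrt (‖a‖ ^ 2 * ‖b‖ ^ 2 - ⟪a, b⟫ ^ 2) with hD'
  have hD0 : 0 ≤ D := Real.sqrt_nonneg _
  have hD2 : D ^ 2 = ‖a‖ ^ 2 * ‖b‖ ^ 2 - ⟪a, b⟫ ^ 2 := Real.sq_sqrt (by linarith)
  rcases lt_or_ge (‖b - n‖) ‖b‖ with hlt | hge
  · have hss := branciard_starstar a b m n hmn hc hlt
    have hβ : 0 < ‖b‖ := lt_of_le_of_lt (norm_nonneg _) hlt
    have hS2 : (Real.sqrt (‖b‖ ^ 2 - ‖b - n‖ ^ 2)) ^ 2 = ‖b‖ ^ 2 - ‖b - n‖ ^ 2 :=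
      Real.sq_sqrt (by nlinarith [norm_nonneg (b - n)])
    have hL0 : 0 ≤ ⟪a, b⟫ * Real.sqrt (‖b‖ ^ 2 - ‖b - n‖ ^ 2) :=
      mul_nonneg hc (Real.sqrt_nonneg _)
    have hsq := mul_self_le_mul_self hL0 hss
    nlinarith [hsq, hS2, hD2, pow_pos hβ 2, sq_nonneg (‖b - n‖)]
  · have h1 : ‖a‖ ^ 2 * ‖b‖ ^ 2 ≤ ‖a‖ ^ 2 * ‖b - n‖ ^ 2 :=
      mul_le_mul_of_nonneg_left (pow_le_pow_left₀ (norm_nonneg b) hge 2) (sq_nonneg ‖a‖)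
    nlinarith [mul_nonneg (mul_nonneg (mul_nonneg (by norm_num : (0:ℝ) ≤ 2)
      (norm_nonneg (a - m))) (norm_nonneg (b - n))) hD0, sq_nonneg (‖a - m‖ * ‖b‖)]

/-- Branciard's geometric inequality with upper bounds on the norms. -/
theorem branciard_geometric_inequality_bounds
    {L : Type*} [NormedAddCommGroup L] [InnerProductSpace ℝ L]
    (a b m n : L) (hmn : (inner ℝ m n : ℝ) = 0)
    (ε η α β : ℝ)
    (hε : ε ≥ ‖a - m‖) (hη : η ≥ ‖b - n‖) (hα : α ≥ ‖a‖) (hβ : β ≥ ‖b‖) :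
    ε ^ 2 * β ^ 2 + α ^ 2 * η ^ 2 +
      2 * ε * η * Real.sqrt (α ^ 2 * β ^ 2 - (inner ℝ a b : ℝ) ^ 2)
      ≥ (inner ℝ a b : ℝ) ^ 2 := by
  have hε' : ‖a - m‖ ≤ ε := hε
  have hη' : ‖b - n‖ ≤ η := hη
  have hα' : ‖a‖ ≤ α := hα
  have hβ' : ‖b‖ ≤ β := hβ
  have hε0 : 0 ≤ ε := le_trans (norm_nonneg _) hε'
  have hη0 : 0 ≤ η := le_trans (norm_nonneg _) hη'
  have hab2 : ‖a‖ ^ 2 * ‖b‖ ^ 2 ≤ α ^ 2 * β ^ 2 :=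
    mul_le_mul (pow_le_pow_left₀ (norm_nonneg a) hα' 2)
      (pow_le_pow_left₀ (norm_nonneg b) hβ' 2) (sq_nonneg _)
      (by positivity)
  have hsqrt : Real.sqrt (‖a‖ ^ 2 * ‖b‖ ^ 2 - ⟪a, b⟫ ^ 2)
      ≤ Real.sqrt (α ^ 2 * β ^ 2 - ⟪a, b⟫ ^ 2) := Real.sqrt_le_sqrt (by linarith)
  have htight : ⟪a, b⟫ ^ 2 ≤ ‖a - m‖ ^ 2 * ‖b‖ ^ 2 + ‖a‖ ^ 2 * ‖b - n‖ ^ 2 +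
      2 * ‖a - m‖ * ‖b - n‖ * Real.sqrt (‖a‖ ^ 2 * ‖b‖ ^ 2 - ⟪a, b⟫ ^ 2) := by
    rcases le_or_gt 0 (⟪a, b⟫ : ℝ) with hc | hc
    · exact branciard_tight a b m n hmn hc
    · have hmn' : ⟪m, -n⟫ = 0 := by rw [inner_neg_right, hmn, neg_zero]
      have hc' : 0 ≤ ⟪a, -b⟫ := by rw [inner_neg_right]; linarith
      have ht := branciard_tight a (-b) m (-n) hmn' hc'
      have e1 : (-b : L) - (-n) = -(b - n) := by abel
      rw [inner_neg_right, e1, norm_neg, norm_neg, neg_sq] at ht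
      exact ht
  have hs0 : 0 ≤ Real.sqrt (‖a‖ ^ 2 * ‖b‖ ^ 2 - ⟪a, b⟫ ^ 2) := Real.sqrt_nonneg _
  have h3 : ‖a - m‖ ^ 2 * ‖b‖ ^ 2 ≤ ε ^ 2 * β ^ 2 :=
    mul_le_mul (pow_le_pow_left₀ (norm_nonneg _) hε' 2)
      (pow_le_pow_left₀ (norm_nonneg b) hβ' 2) (sq_nonneg _) (by positivity)
  have h4 : ‖a‖ ^ 2 * ‖b - n‖ ^ 2 ≤ α ^ 2 * η ^ 2 :=
    mul_le_mul (pow_le_pow_left₀ (norm_nonneg a) hα' 2)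
      (pow_le_pow_left₀ (norm_nonneg _) hη' 2) (sq_nonneg _) (by positivity)
  have h2 : 2 * ‖a - m‖ * ‖b - n‖ * Real.sqrt (‖a‖ ^ 2 * ‖b‖ ^ 2 - ⟪a, b⟫ ^ 2)
      ≤ 2 * ε * η * Real.sqrt (α ^ 2 * β ^ 2 - ⟪a, b⟫ ^ 2) := by
    apply mul_le_mul _ hsqrt hs0 (by positivity)
    apply mul_le_mul _ hη' (norm_nonneg _) (by positivity)
    linarith
  linarith
end

section
/- Let ρ be an n×n complex positive semidefinite matrix with trace 1 and let A, B be n×n Hermitian matrices. Then (1/2)·Tr√(XᴴX) ≤ σ(A;ρ)·σ(B;ρ), where X = √ρ·(−i(AB − BA))·√ρ, √ρ is the positive semidefinite square root of ρ, and σ(A;ρ) = √(Tr[ρA²] − (Tr[ρA])²), σ(B;ρ) = √(Tr[ρB²] − (Tr[ρB])²). In other words, D_{A,B,ρ} ≤ σ(A;ρ)·σ(B;ρ). -/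
open Matrix
open scoped ComplexOrder

/-- The positive semidefinite square root of a positive semidefinite matrix
(the definition `Matrix.PosSemidef.sqrt` of the older Mathlib, removed since). -/
noncomputable def Matrix.PosSemidef.sqrt {n : Type*} [Fintype n] [DecidableEq n]
    {A : Matrix n n ℂ} (hA : A.PosSemidef) : Matrix n n ℂ :=
  hA.1.eigenvectorUnitary.1 * diagonal ((↑) ∘ (Real.sqrt ·) ∘ hA.1.eigenvalues) *
    (star hA.1.eigenvectorUnitary : Matrix n n ℂ)

/-- The trace norm `Tr√(XᴴX)` of a complex square matrix. -/
noncomputable def traceNorm {k : Type*} [Fintype k] [DecidableEq k]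
    (X : Matrix k k ℂ) : ℝ :=
  ((Matrix.posSemidef_conjTranspose_mul_self X).sqrt).trace.re

open scoped MatrixOrder in
lemma Matrix.PosSemidef.sqrt_eq_cfc' {n : Type*} [Fintype n] [DecidableEq n]
    {A : Matrix n n ℂ} (hA : A.PosSemidef) : hA.sqrt = CFC.sqrt A := by
  rw [CFC.sqrt_eq_cfc, cfc_nnreal_eq_real _ A, hA.1.cfc_eq, IsHermitian.cfc, Unitary.conjStarAlgAut_apply,
    Matrix.PosSemidef.sqrt]
  congr 3
  funext i
  simp [Real.coe_sqrt, Real.coe_toNNReal', max_eq_left (hA.eigenvalues_nonneg i)]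

open scoped MatrixOrder in
lemma Matrix.PosSemidef.posSemidef_sqrt {n : Type*} [Fintype n] [DecidableEq n]
    {A : Matrix n n ℂ} (hA : A.PosSemidef) : hA.sqrt.PosSemidef := by
  rw [hA.sqrt_eq_cfc']
  exact Matrix.nonneg_iff_posSemidef.mp (CFC.sqrt_nonneg A)

open scoped MatrixOrder in
lemma Matrix.PosSemidef.sqrt_mul_self {n : Type*} [Fintype n] [DecidableEq n]
    {A : Matrix n n ℂ} (hA : A.PosSemidef) : hA.sqrt * hA.sqrt = A := by
  rw [hA.sqrt_eq_cfc']
  exact CFC.sqrt_mul_sqrt_self A hA.nonneg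

open scoped MatrixOrder in
lemma Matrix.PosSemidef.eq_sqrt_of_sq_eq {n : Type*} [Fintype n] [DecidableEq n]
    {A : Matrix n n ℂ} (hA : A.PosSemidef) {B : Matrix n n ℂ} (hB : B.PosSemidef)
    (h : A ^ 2 = B) : A = hB.sqrt := by
  rw [hB.sqrt_eq_cfc']
  exact (CFC.sqrt_unique (by rw [← h, sq]) hA.nonneg).symm

lemma traceNorm_hermitian {k : Type*} [Fintype k] [DecidableEq k]
    {X : Matrix k k ℂ} (hX : X.IsHermitian) :
    traceNorm X = ∑ i, |hX.eigenvalues i| := by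
  classical
  set U : Matrix k k ℂ := (hX.eigenvectorUnitary : Matrix k k ℂ) with hU
  have hUU' : star U * U = 1 := (Matrix.mem_unitaryGroup_iff').mp hX.eigenvectorUnitary.2
  set D : Matrix k k ℂ := diagonal (fun i => ((|hX.eigenvalues i| : ℝ) : ℂ)) with hD
  set M : Matrix k k ℂ := U * D * star U with hM
  have hDpsd : D.PosSemidef := by
    refine posSemidef_diagonal_iff.mpr fun i => ?_
    exact_mod_cast Complex.zero_le_real.mpr (abs_nonneg _)
  have hMpsd : M.PosSemidef := hDpsd.mul_mul_conjTranspose_same U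
  have hM2 : M ^ 2 = Xᴴ * X := by
    have hXX : Xᴴ * X = X * X := by rw [hX.eq]
    rw [hXX]
    have hspec := hX.spectral_theorem
    calc M ^ 2 = U * (D * (star U * U) * D) * star U := by
          simp [hM, pow_two, mul_assoc]
      _ = U * (D * D) * star U := by rw [hUU']; simp [mul_assoc]
      _ = X * X := by
          rw [hspec, Unitary.conjStarAlgAut_apply]
          have : D * D = diagonal (RCLike.ofReal ∘ hX.eigenvalues) *
              diagonal (RCLike.ofReal ∘ hX.eigenvalues) := by
            simp only [hD, diagonal_mul_diagonal]
            funext i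
            simp [Function.comp, ← Complex.ofReal_mul, abs_mul_abs_self]
          rw [this]
          simp only [mul_assoc]
          congr 2
          simp only [← mul_assoc]
          rw [hUU']
          simp [mul_assoc]
          rfl
  have hMeq : M = (Matrix.posSemidef_conjTranspose_mul_self X).sqrt :=
    hMpsd.eq_sqrt_of_sq_eq _ hM2
  rw [traceNorm, ← hMeq, hM]
  rw [Matrix.trace_mul_comm, ← mul_assoc, hUU', one_mul]
  simp [hD, Matrix.trace_diagonal, Complex.re_sum]

lemma dot_cs {k : Type*} [Fintype k] (v w : k → ℂ) :
    ‖star v ⬝ᵥ w‖ ≤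
      Real.sqrt (star v ⬝ᵥ v).re * Real.sqrt (star w ⬝ᵥ w).re := by
  let x : EuclideanSpace ℂ k := WithLp.toLp 2 v
  let y : EuclideanSpace ℂ k := WithLp.toLp 2 w
  have hxy : (inner ℂ x y : ℂ) = star v ⬝ᵥ w := by
    rw [EuclideanSpace.inner_toLp_toLp, dotProduct_comm]
  have hxx : (inner ℂ x x : ℂ) = star v ⬝ᵥ v := by
    rw [EuclideanSpace.inner_toLp_toLp, dotProduct_comm]
  have hyy : (inner ℂ y y : ℂ) = star w ⬝ᵥ w := by
    rw [EuclideanSpace.inner_toLp_toLp, dotProduct_comm]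
  have h1 : ‖(inner ℂ x y : ℂ)‖ ≤ ‖x‖ * ‖y‖ := norm_inner_le_norm x y
  have hx : Real.sqrt (star v ⬝ᵥ v).re = ‖x‖ := by
    rw [← hxx]; exact (norm_eq_sqrt_re_inner (𝕜 := ℂ) x).symm
  have hy : Real.sqrt (star w ⬝ᵥ w).re = ‖y‖ := by
    rw [← hyy]; exact (norm_eq_sqrt_re_inner (𝕜 := ℂ) y).symm
  rw [hx, hy, ← hxy]
  exact h1

lemma dot_self_re_nonneg {k : Type*} [Fintype k] (w : k → ℂ) : 0 ≤ (star w ⬝ᵥ w).re := by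
  have : (star w ⬝ᵥ w).re = ∑ j, Complex.normSq (w j) := by
    simp [dotProduct, Complex.re_sum, Complex.normSq_apply, Complex.mul_re]
  rw [this]
  exact Finset.sum_nonneg fun j _ => Complex.normSq_nonneg _

lemma trace_sum_eigenbasis {k : Type*} [Fintype k] [DecidableEq k] {X : Matrix k k ℂ}
    (hX : X.IsHermitian) (M : Matrix k k ℂ) :
    ∑ i, star (⇑(hX.eigenvectorBasis i)) ⬝ᵥ (M *ᵥ ⇑(hX.eigenvectorBasis i)) = M.trace := by
  set U : Matrix k k ℂ := (hX.eigenvectorUnitary : Matrix k k ℂ) with hU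
  have hUU : U * star U = 1 := (Matrix.mem_unitaryGroup_iff).mp hX.eigenvectorUnitary.2
  have key : ∀ i, star (⇑(hX.eigenvectorBasis i)) ⬝ᵥ (M *ᵥ ⇑(hX.eigenvectorBasis i))
      = (star U * M * U) i i := by
    intro i
    simp only [Matrix.mul_apply, dotProduct, mulVec, Finset.sum_mul, Finset.mul_sum,
      star_apply, Pi.star_apply]
    rw [Finset.sum_comm]
    refine Finset.sum_congr rfl fun j _ => Finset.sum_congr rfl fun l _ => ?_
    have h1 : U j i = (hX.eigenvectorBasis i) j := hX.eigenvectorUnitary_apply j i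
    have h2 : U l i = (hX.eigenvectorBasis i) l := hX.eigenvectorUnitary_apply l i
    rw [h1, h2]
    show star ((hX.eigenvectorBasis i) l) * (M l j * (hX.eigenvectorBasis i) j)
      = star ((hX.eigenvectorBasis i) l) * M l j * (hX.eigenvectorBasis i) j
    ring
  rw [Finset.sum_congr rfl fun i _ => key i]
  have h3 : ∑ i, (star U * M * U) i i = (star U * M * U).trace := rfl
  rw [h3, Matrix.trace_mul_comm, ← Matrix.mul_assoc, hUU, Matrix.one_mul]

/-- `D_{A,B,ρ} ≤ σ(A;ρ)·σ(B;ρ)`. -/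
theorem D_le_sigma_mul_sigma {n : ℕ}
    (ρ A B : Matrix (Fin n) (Fin n) ℂ)
    (hρ : ρ.PosSemidef) (hρtr : ρ.trace = 1)
    (hA : A.IsHermitian) (hB : B.IsHermitian) :
    (1 / 2 : ℝ) * traceNorm (hρ.sqrt * ((-Complex.I) • (A * B - B * A)) * hρ.sqrt)
      ≤ Real.sqrt (((ρ * (A * A)).trace).re - (((ρ * A).trace).re) ^ 2) *
        Real.sqrt (((ρ * (B * B)).trace).re - (((ρ * B).trace).re) ^ 2) := by
  classical
  set S : Matrix (Fin n) (Fin n) ℂ := hρ.sqrt with hSdef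
  have hS : S.PosSemidef := hρ.posSemidef_sqrt
  have hSH : Sᴴ = S := hS.1
  have hSS : S * S = ρ := hρ.sqrt_mul_self
  -- real expectation values
  have hreal : ∀ (C : Matrix (Fin n) (Fin n) ℂ), C.IsHermitian →
      (ρ * C).trace = ((((ρ * C).trace).re : ℝ) : ℂ) := by
    intro C hC
    have hst : (starRingEnd ℂ) ((ρ * C).trace) = (ρ * C).trace := by
      calc (starRingEnd ℂ) ((ρ * C).trace) = ((ρ * C)ᴴ).trace := by
            rw [Matrix.trace_conjTranspose]; rfl
        _ = (Cᴴ * ρᴴ).trace := by rw [conjTranspose_mul]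
        _ = (C * ρ).trace := by rw [hC.eq, hρ.1.eq]
        _ = (ρ * C).trace := Matrix.trace_mul_comm _ _
    exact (Complex.conj_eq_iff_re.mp hst).symm
  set a : ℝ := ((ρ * A).trace).re with hadef
  set b : ℝ := ((ρ * B).trace).re with hbdef
  have haa : (ρ * A).trace = (a : ℂ) := hreal A hA
  have hbb : (ρ * B).trace = (b : ℂ) := hreal B hB
  set A' : Matrix (Fin n) (Fin n) ℂ := A - (a : ℂ) • 1 with hA'def
  set B' : Matrix (Fin n) (Fin n) ℂ := B - (b : ℂ) • 1 with hB'def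
  have hA'H : A'ᴴ = A' := by
    rw [hA'def, conjTranspose_sub, hA.eq, conjTranspose_smul, conjTranspose_one]
    simp [Complex.conj_ofReal]
  have hB'H : B'ᴴ = B' := by
    rw [hB'def, conjTranspose_sub, hB.eq, conjTranspose_smul, conjTranspose_one]
    simp [Complex.conj_ofReal]
  set P : Matrix (Fin n) (Fin n) ℂ := A' * S with hPdef
  set Q : Matrix (Fin n) (Fin n) ℂ := B' * S with hQdef
  have hPH : Pᴴ = S * A' := by rw [hPdef, conjTranspose_mul, hA'H, hSH]
  have hQH : Qᴴ = S * B' := by rw [hQdef, conjTranspose_mul, hB'H, hSH]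
  set X : Matrix (Fin n) (Fin n) ℂ := S * ((-Complex.I) • (A * B - B * A)) * S with hXdef
  have hcomm : A' * B' - B' * A' = A * B - B * A := by
    simp only [hA'def, hB'def, sub_mul, mul_sub, smul_sub, sub_smul, smul_mul_assoc,
      mul_smul_comm, one_mul, mul_one, smul_smul]
    rw [mul_comm (b:ℂ) (a:ℂ)]
    abel
  have hX1 : X = (-Complex.I) • (Pᴴ * Q - Qᴴ * P) := by
    rw [hXdef, hPH, hQH, hPdef, hQdef, ← hcomm]
    rw [mul_smul_comm, smul_mul_assoc]
    congr 1
    noncomm_ring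
  have hXherm : X.IsHermitian := by
    have h : (Pᴴ * Q - Qᴴ * P)ᴴ = -(Pᴴ * Q - Qᴴ * P) := by
      simp only [conjTranspose_sub, conjTranspose_mul, conjTranspose_conjTranspose, neg_sub]
    show Xᴴ = X
    rw [hX1, conjTranspose_smul, h]
    have hstar : (star (-Complex.I) : ℂ) = Complex.I := by simp
    rw [hstar, smul_neg, ← neg_smul]
  set v : Fin n → (Fin n → ℂ) := fun i => ⇑(hXherm.eigenvectorBasis i) with hvdef
  set z : Fin n → ℂ := fun i => star (P *ᵥ v i) ⬝ᵥ (Q *ᵥ v i) with hzdef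
  have hdotPQ : ∀ (M N : Matrix (Fin n) (Fin n) ℂ) (u : Fin n → ℂ),
      star u ⬝ᵥ ((Mᴴ * N) *ᵥ u) = star (M *ᵥ u) ⬝ᵥ (N *ᵥ u) := by
    intro M N u
    rw [← Matrix.mulVec_mulVec, Matrix.dotProduct_mulVec, ← Matrix.star_mulVec]
  have star_dot : ∀ (x y : Fin n → ℂ), (starRingEnd ℂ) (star x ⬝ᵥ y) = star y ⬝ᵥ x := by
    intro x y
    show star (star x ⬝ᵥ y) = star y ⬝ᵥ x
    simp [dotProduct, Complex.star_def, map_sum, mul_comm]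
  have hzconj : ∀ i, star (v i) ⬝ᵥ ((Qᴴ * P) *ᵥ v i) = (starRingEnd ℂ) (z i) := by
    intro i
    rw [hdotPQ]
    exact (star_dot (P *ᵥ v i) (Q *ᵥ v i)).symm
  have heval : ∀ i, star (v i) ⬝ᵥ (X *ᵥ v i)
      = (-Complex.I) * (z i - (starRingEnd ℂ) (z i)) := by
    intro i
    rw [hX1, Matrix.smul_mulVec, dotProduct_smul, Matrix.sub_mulVec,
      dotProduct_sub, hdotPQ, hzconj i]
    simp [hzdef, smul_eq_mul]
  have hlam : ∀ i, hXherm.eigenvalues i = 2 * (z i).im := by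
    intro i
    rw [hXherm.eigenvalues_eq i]
    have e : star (⇑(hXherm.eigenvectorBasis i)) ⬝ᵥ (X *ᵥ ⇑(hXherm.eigenvectorBasis i))
        = (-Complex.I) * (z i - (starRingEnd ℂ) (z i)) := heval i
    rw [e]
    simp [Complex.mul_re, Complex.sub_re, Complex.sub_im]
    ring
  set pp : Fin n → ℝ := fun i => (star (P *ᵥ v i) ⬝ᵥ (P *ᵥ v i)).re with hppdef
  set qq : Fin n → ℝ := fun i => (star (Q *ᵥ v i) ⬝ᵥ (Q *ᵥ v i)).re with hqqdef
  have hppnn : ∀ i, 0 ≤ pp i := fun i => dot_self_re_nonneg _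
  have hqqnn : ∀ i, 0 ≤ qq i := fun i => dot_self_re_nonneg _
  have habs : ∀ i, |hXherm.eigenvalues i| ≤ 2 * (Real.sqrt (pp i) * Real.sqrt (qq i)) := by
    intro i
    rw [hlam i, abs_mul, abs_two]
    have h1 : |(z i).im| ≤ ‖z i‖ := Complex.abs_im_le_norm _
    have h2 : ‖z i‖ ≤ Real.sqrt (pp i) * Real.sqrt (qq i) := dot_cs _ _
    nlinarith [h1, h2, norm_nonneg (z i)]
  -- sums of pp and qq are traces
  have hsump : ∑ i, pp i = ((Pᴴ * P).trace).re := by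
    have := trace_sum_eigenbasis hXherm (Pᴴ * P)
    rw [hppdef]
    calc ∑ i, (star (P *ᵥ v i) ⬝ᵥ (P *ᵥ v i)).re
        = (∑ i, star (P *ᵥ v i) ⬝ᵥ (P *ᵥ v i)).re := by rw [Complex.re_sum]
      _ = ((Pᴴ * P).trace).re := by
          rw [← this]
          congr 1
          exact Finset.sum_congr rfl fun i _ => (hdotPQ P P (v i)).symm
  have hsumq : ∑ i, qq i = ((Qᴴ * Q).trace).re := by
    have := trace_sum_eigenbasis hXherm (Qᴴ * Q)
    rw [hqqdef]
    calc ∑ i, (star (Q *ᵥ v i) ⬝ᵥ (Q *ᵥ v i)).re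
        = (∑ i, star (Q *ᵥ v i) ⬝ᵥ (Q *ᵥ v i)).re := by rw [Complex.re_sum]
      _ = ((Qᴴ * Q).trace).re := by
          rw [← this]
          congr 1
          exact Finset.sum_congr rfl fun i _ => (hdotPQ Q Q (v i)).symm
  -- traces equal variances
  have htrP : (Pᴴ * P).trace = (ρ * (A * A)).trace - (a : ℂ) ^ 2 := by
    have h1 : Pᴴ * P = S * (A' * A') * S := by rw [hPH, hPdef]; noncomm_ring
    have h2 : (S * (A' * A') * S).trace = (ρ * (A' * A')).trace := by
      rw [Matrix.trace_mul_comm, ← Matrix.mul_assoc, hSS, Matrix.trace_mul_comm]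
    have h3 : ρ * (A' * A') = ρ * (A * A) - (a : ℂ) • (ρ * A) - (a : ℂ) • (ρ * A)
        + ((a : ℂ) * (a : ℂ)) • ρ := by
      simp only [hA'def, sub_mul, mul_sub, smul_sub, mul_smul_comm, smul_mul_assoc,
        one_mul, mul_one, smul_smul]
      abel
    rw [h1, h2, h3]
    simp only [Matrix.trace_add, Matrix.trace_sub, Matrix.trace_smul, haa, hρtr,
      smul_eq_mul, mul_one]
    ring
  have htrQ : (Qᴴ * Q).trace = (ρ * (B * B)).trace - (b : ℂ) ^ 2 := by
    have h1 : Qᴴ * Q = S * (B' * B') * S := by rw [hQH, hQdef]; noncomm_ring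
    have h2 : (S * (B' * B') * S).trace = (ρ * (B' * B')).trace := by
      rw [Matrix.trace_mul_comm, ← Matrix.mul_assoc, hSS, Matrix.trace_mul_comm]
    have h3 : ρ * (B' * B') = ρ * (B * B) - (b : ℂ) • (ρ * B) - (b : ℂ) • (ρ * B)
        + ((b : ℂ) * (b : ℂ)) • ρ := by
      simp only [hB'def, sub_mul, mul_sub, smul_sub, mul_smul_comm, smul_mul_assoc,
        one_mul, mul_one, smul_smul]
      abel
    rw [h1, h2, h3]
    simp only [Matrix.trace_add, Matrix.trace_sub, Matrix.trace_smul, hbb, hρtr,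
      smul_eq_mul, mul_one]
    ring
  have hsump' : ∑ i, pp i = ((ρ * (A * A)).trace).re - a ^ 2 := by
    rw [hsump, htrP, Complex.sub_re]
    norm_num [← Complex.ofReal_pow]
  have hsumq' : ∑ i, qq i = ((ρ * (B * B)).trace).re - b ^ 2 := by
    rw [hsumq, htrQ, Complex.sub_re]
    norm_num [← Complex.ofReal_pow]
  -- final chain
  rw [traceNorm_hermitian hXherm]
  have step1 : ∑ i, |hXherm.eigenvalues i|
      ≤ 2 * ∑ i, Real.sqrt (pp i) * Real.sqrt (qq i) := by
    rw [Finset.mul_sum]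
    exact Finset.sum_le_sum fun i _ => habs i
  have step2 : ∑ i, Real.sqrt (pp i) * Real.sqrt (qq i)
      ≤ Real.sqrt (∑ i, pp i) * Real.sqrt (∑ i, qq i) :=
    Real.sum_sqrt_mul_sqrt_le _ hppnn hqqnn
  rw [← hsump', ← hsumq']
  linarith [step1, step2]
end
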